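/- Let n be a positive integer and p a nonnegative integer. Let η = (1, 2, …, n-1, n+p) ∈ ℤ^n. Let ν ∈ ℤ^n be an n-tuple with |ν| = |η|. Then det(([ν_i ≥ j])_{i,j ∈ [n]}) = Σ_{σ ∈ S_n, ν = η∘σ} (-1)^σ, where [P] is the Iverson bracket (1 if P is true, 0 otherwise), the determinant is over ℤ, and η∘σ := (η_{σ(1)}, …, η_{σ(n)}). -/

import Mathlib

/-- Lemma on the integer determinant of the matrix ([ν_i ≥ j]):
if η = (1, 2, …, n-1, n+p) and |ν| = |η|, then
det(([ν_i ≥ j])) = Σ_{σ : ν = η∘σ} (-1)^σ. -/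
theorem nu_det (n : ℕ) (hn : 0 < n) (p : ℕ) (η : Fin n → ℤ)
    (hη : ∀ j : Fin n, η j = if (j : ℕ) + 1 = n then (n : ℤ) + (p : ℤ) else ((j : ℕ) : ℤ) + 1)
    (ν : Fin n → ℤ) (hsum : ∑ i, ν i = ∑ i, η i) :
    Matrix.det (Matrix.of fun i j : Fin n => if ((j : ℕ) : ℤ) + 1 ≤ ν i then (1 : ℤ) else 0)
      = ∑ σ ∈ Finset.univ.filter (fun σ : Equiv.Perm (Fin n) => ∀ i, ν i = η (σ i)),
          (Equiv.Perm.sign σ : ℤ) := by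
  set M : Matrix (Fin n) (Fin n) ℤ :=
    Matrix.of fun i j : Fin n => if ((j : ℕ) : ℤ) + 1 ≤ ν i then (1 : ℤ) else 0 with hM
  -- basic facts about η
  have hη1 : ∀ j : Fin n, 1 ≤ η j := by
    intro j; rw [hη j]; split <;> push_cast <;> omega
  have hηlt : ∀ j : Fin n, (j : ℕ) + 1 ≠ n → η j < n := by
    intro j hj; rw [hη j, if_neg hj]
    have := j.isLt; push_cast; omega
  have hηinj : Function.Injective η := by
    intro j j' h
    by_cases h1 : (j : ℕ) + 1 = n <;> by_cases h2 : (j' : ℕ) + 1 = n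
    · exact Fin.ext (by omega)
    · exfalso; have := hηlt j' h2; rw [← h, hη j, if_pos h1] at this; push_cast at this; omega
    · exfalso; have := hηlt j h1; rw [h, hη j', if_pos h2] at this; push_cast at this; omega
    · rw [hη j, if_neg h1, hη j', if_neg h2] at h; exact Fin.ext (by omega)
  by_cases hinj : Function.Injective ν
  · by_cases hpos : ∀ i, 1 ≤ ν i
    · by_cases hbig : ∃ i i' : Fin n, i ≠ i' ∧ (n : ℤ) ≤ ν i ∧ (n : ℤ) ≤ ν i'
      · -- two all-one rows: det = 0, and no matching permutation
        obtain ⟨i, i', hne, hi, hi'⟩ := hbig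
        have hrow : M i = M i' := by
          funext j
          have hj : ((j : ℕ) : ℤ) + 1 ≤ (n : ℤ) := by have := j.isLt; push_cast; omega
          simp [hM, if_pos (hj.trans hi), if_pos (hj.trans hi')]
          rw [if_pos (by omega), if_pos (by omega)]
        rw [Matrix.det_zero_of_row_eq hne hrow]
        rw [Finset.filter_false_of_mem, Finset.sum_empty]
        intro σ _ hσ
        have h1 : ((σ i : ℕ) : ℕ) + 1 = n := by
          by_contra h
          have := hηlt (σ i) h; rw [← hσ i] at this; omega
        have h2 : ((σ i' : ℕ) : ℕ) + 1 = n := by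
          by_contra h
          have := hηlt (σ i') h; rw [← hσ i'] at this; omega
        exact hne (σ.injective (Fin.ext (by omega)))
      · -- main case
        push_neg at hbig
        -- there is a unique index i₀ with ν i₀ ≥ n
        have hex : ∃ i₀ : Fin n, (n : ℤ) ≤ ν i₀ := by
          by_contra h
          push_neg at h
          have hcard : (Finset.univ : Finset (Fin n)).card ≤
              (Finset.Icc (1 : ℤ) ((n : ℤ) - 1)).card := by
            apply Finset.card_le_card_of_injOn ν
            · intro i _
              rw [Finset.mem_coe, Finset.mem_Icc]
              exact ⟨hpos i, by have := h i; omega⟩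
            · exact fun a _ b _ hab => hinj hab
          rw [Finset.card_univ, Fintype.card_fin, Int.card_Icc] at hcard
          omega
        obtain ⟨i₀, hi₀⟩ := hex
        have hsmall : ∀ i : Fin n, i ≠ i₀ → ν i < n := by
          intro i hne
          by_contra h
          have := hbig i i₀ hne (by omega); omega
        -- construct the permutation
        have hf : ∀ i : Fin n, (if i = i₀ then n - 1 else (ν i - 1).toNat) < n := by
          intro i
          split
          · omega
          · rename_i h
            have h1 := hpos i
            have h2 := hsmall i h
            omega
        set f : Fin n → Fin n := fun i => ⟨if i = i₀ then n - 1 else (ν i - 1).toNat, hf i⟩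
          with hfdef
        have hfval : ∀ i : Fin n, i ≠ i₀ → η (f i) = ν i := by
          intro i hne
          have h1 := hpos i
          have h2 := hsmall i hne
          have hv : (f i : ℕ) = (ν i - 1).toNat := by simp [hfdef, hne]
          rw [hη (f i), hv, if_neg (by omega)]
          omega
        have hfinj : Function.Injective f := by
          intro a b hab
          by_cases ha : a = i₀ <;> by_cases hb : b = i₀
          · rw [ha, hb]
          · exfalso
            have := congrArg Fin.val hab
            simp only [hfdef, if_pos ha, if_neg hb] at this
            have h1 := hpos b; have h2 := hsmall b hb
            omega
          · exfalso
            have := congrArg Fin.val hab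
            simp only [hfdef, if_neg ha, if_pos hb] at this
            have h1 := hpos a; have h2 := hsmall a ha
            omega
          · have := congrArg Fin.val hab
            simp only [hfdef, if_neg ha, if_neg hb] at this
            have h1 := hpos a; have h2 := hpos b
            exact hinj (by omega)
        set σ : Equiv.Perm (Fin n) :=
          Equiv.ofBijective f ((Fintype.bijective_iff_injective_and_card f).2 ⟨hfinj, rfl⟩)
          with hσdef
        have hσapp : ∀ i, σ i = f i := fun i => rfl
        have hνσ' : ∀ i : Fin n, i ≠ i₀ → ν i = η (σ i) := by
          intro i hne; rw [hσapp, hfval i hne]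
        -- the value at i₀ via the sum condition
        have hνσ : ∀ i : Fin n, ν i = η (σ i) := by
          have key : ν i₀ + ∑ i ∈ Finset.univ.erase i₀, η (σ i)
              = η (σ i₀) + ∑ i ∈ Finset.univ.erase i₀, η (σ i) := by
            calc ν i₀ + ∑ i ∈ Finset.univ.erase i₀, η (σ i)
                = ν i₀ + ∑ i ∈ Finset.univ.erase i₀, ν i := by
                  congr 1
                  exact Finset.sum_congr rfl fun i hi =>
                    (hνσ' i (Finset.ne_of_mem_erase hi)).symm
              _ = ∑ i, ν i := Finset.add_sum_erase _ _ (Finset.mem_univ i₀)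
              _ = ∑ i, η i := hsum
              _ = ∑ i, η (σ i) := (Equiv.sum_comp σ η).symm
              _ = η (σ i₀) + ∑ i ∈ Finset.univ.erase i₀, η (σ i) :=
                  (Finset.add_sum_erase _ _ (Finset.mem_univ i₀)).symm
          intro i
          by_cases hi : i = i₀
          · subst hi; exact add_right_cancel key
          · exact hνσ' i hi
        -- RHS = sign σ
        have hfilter : Finset.univ.filter (fun τ : Equiv.Perm (Fin n) => ∀ i, ν i = η (τ i))
            = {σ} := by
          ext τ
          simp only [Finset.mem_filter, Finset.mem_univ, true_and, Finset.mem_singleton]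
          constructor
          · intro hτ
            ext i
            have : η (τ i) = η (σ i) := by rw [← hτ i, ← hνσ i]
            exact congrArg Fin.val (hηinj this)
          · rintro rfl; exact hνσ
        rw [hfilter, Finset.sum_singleton]
        -- LHS = sign σ
        set N : Matrix (Fin n) (Fin n) ℤ :=
          Matrix.of fun k j : Fin n => if ((j : ℕ) : ℤ) + 1 ≤ η k then (1 : ℤ) else 0 with hN
        have hMN : M = N.submatrix σ id := by
          funext i j
          simp only [hM, hN, Matrix.submatrix_apply, Matrix.of_apply, id_eq, hνσ i]
        have hNtri : N.BlockTriangular OrderDual.toDual := by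
          intro i j hij
          have hij' : (i : ℕ) < (j : ℕ) := hij
          simp only [hN, Matrix.of_apply, ite_eq_right_iff]
          intro hle
          exfalso
          have hin : (i : ℕ) + 1 ≠ n := by have := j.isLt; omega
          have := hηlt i hin
          rw [hη i, if_neg hin] at hle
          push_cast at hle
          omega
        have hNdet : N.det = 1 := by
          rw [Matrix.det_of_lowerTriangular N hNtri]
          apply Finset.prod_eq_one
          intro k _
          simp only [hN, Matrix.of_apply, if_pos]
          rw [if_pos]
          rw [hη k]
          split <;> push_cast <;> [omega; omega]
        rw [hMN, Matrix.det_permute, hNdet, mul_one]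
        norm_cast
    · -- some ν i ≤ 0 : zero row, and no matching permutation
      push_neg at hpos
      obtain ⟨i, hi⟩ := hpos
      rw [Matrix.det_eq_zero_of_row_eq_zero i (fun j => by
        simp only [hM, Matrix.of_apply, ite_eq_right_iff]
        intro h; exfalso; have : (0:ℤ) ≤ ((j:ℕ):ℤ) := Int.natCast_nonneg _; omega)]
      rw [Finset.filter_false_of_mem, Finset.sum_empty]
      intro σ _ hσ
      have := hη1 (σ i)
      rw [← hσ i] at this
      omega
  · -- ν not injective : repeated row, and no matching permutation
    simp only [Function.Injective, not_forall] at hinj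
    obtain ⟨a, b, hab, hne⟩ := hinj
    have hrow : M a = M b := by
      funext j; simp [hM, hab]
    rw [Matrix.det_zero_of_row_eq hne hrow]
    rw [Finset.filter_false_of_mem, Finset.sum_empty]
    intro σ _ hσ
    apply hne
    apply σ.injective
    apply hηinj
    rw [← hσ a, ← hσ b, hab]
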